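/- There exists a universal constant ξ > 0 such that for every n ∈ ℕ with n ≥ 1 and every t ∈ ℤ with |t| ≤ n^{3/5}, n+t even and |t| ≤ n, it holds that |C(n,(n+t)/2)·2^{-n} − c₀| ≤ ξ·(|t|³/n² + 1/n)·c₀, where c₀ := √(2/π)·(1/√n)·e^{-t²/(2n)} and C(n,k) denotes the binomial coefficient n choose k. -/

import Mathlib

set_option maxHeartbeats 1000000

open Real Filter Topology

noncomputable def SE (n : ℕ) : ℝ :=
  Real.log (Nat.factorial n) - ((n:ℝ) * Real.log n - n + Real.log (Real.sqrt (2 * Real.pi * n)))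

lemma SE_def (n : ℕ) : SE n =
    Real.log (Nat.factorial n) - ((n:ℝ) * Real.log n - n + Real.log (Real.sqrt (2 * Real.pi * n))) :=
  rfl

lemma SE_eq (n : ℕ) (hn : 1 ≤ n) :
    SE n = Real.log (Stirling.stirlingSeq n) - Real.log (Real.sqrt Real.pi) := by
  have hn0 : (0:ℝ) < n := by exact_mod_cast hn
  rw [SE, Stirling.log_stirlingSeq_formula]
  rw [Real.log_div (by positivity) (Real.exp_ne_zero 1), Real.log_exp]
  rw [Real.log_sqrt (by positivity), Real.log_sqrt Real.pi_pos.le]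
  rw [show (2*Real.pi*(n:ℝ)) = (2*(n:ℝ))*Real.pi by ring,
    Real.log_mul (by positivity) Real.pi_ne_zero]
  ring

lemma stirling_antitone {a b : ℕ} (ha : 1 ≤ a) (hab : a ≤ b) :
    Stirling.stirlingSeq b ≤ Stirling.stirlingSeq a := by
  obtain ⟨a', rfl⟩ := Nat.exists_eq_add_of_le ha
  obtain ⟨b', rfl⟩ := Nat.exists_eq_add_of_le (le_trans ha hab)
  have := Stirling.stirlingSeq'_antitone (a := a') (b := b') (by omega)
  simpa [Function.comp, Nat.succ_eq_add_one, Nat.add_comm] using this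

lemma sqrt_pi_le_stirling (n : ℕ) (hn : 1 ≤ n) :
    Real.sqrt Real.pi ≤ Stirling.stirlingSeq n := by
  refine le_of_tendsto Stirling.tendsto_stirlingSeq_sqrt_pi ?_
  filter_upwards [eventually_ge_atTop n] with m hm
  exact stirling_antitone hn hm

lemma SE_nonneg (n : ℕ) (hn : 1 ≤ n) : 0 ≤ SE n := by
  rw [SE_eq n hn]
  have h1 := sqrt_pi_le_stirling n hn
  have h2 : (0:ℝ) < Real.sqrt Real.pi := Real.sqrt_pos.2 Real.pi_pos
  have := Real.log_le_log h2 h1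
  linarith

lemma stirling_tele (p : ℕ) : ∀ N, p ≤ N →
    Real.log (Stirling.stirlingSeq (p+1)) - Real.log (Stirling.stirlingSeq (N+1)) ≤
      1/(2*((p:ℝ)+1)) - 1/(2*((N:ℝ)+1)) := by
  refine Nat.le_induction (by norm_num) ?_
  intro N hN ih
  have h := Stirling.log_stirlingSeq_sub_log_stirlingSeq_succ (N+1)
  have hN0 : (0:ℝ) ≤ (N:ℝ) := Nat.cast_nonneg N
  have key : 1 / (4 * ((N:ℝ)+1)^2) ≤ 1/(2*((N:ℝ)+1)) - 1/(2*((N:ℝ)+1+1)) := by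
    rw [div_sub_div _ _ (by positivity) (by positivity), div_le_div_iff₀ (by positivity) (by positivity)]
    ring_nf
    nlinarith
  push_cast at h ⊢
  linarith

lemma SE_le (n : ℕ) (hn : 1 ≤ n) : SE n ≤ 1 / (2*(n:ℝ)) := by
  obtain ⟨p, rfl⟩ := Nat.exists_eq_add_of_le hn
  rw [Nat.add_comm 1 p]
  rw [SE_eq _ (by omega)]
  have hlim : Tendsto (fun N : ℕ => Real.log (Stirling.stirlingSeq (N+1)))
      atTop (𝓝 (Real.log (Real.sqrt Real.pi))) := by
    have hc : ContinuousAt Real.log (Real.sqrt Real.pi) :=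
      Real.continuousAt_log (by positivity)
    exact (hc.tendsto.comp Stirling.tendsto_stirlingSeq_sqrt_pi).comp
      (tendsto_add_atTop_nat 1)
  have hb : Real.log (Stirling.stirlingSeq (p+1)) - 1/(2*((p:ℝ)+1)) ≤
      Real.log (Real.sqrt Real.pi) := by
    refine ge_of_tendsto hlim ?_
    filter_upwards [eventually_ge_atTop p] with N hN
    have := stirling_tele p N hN
    have h2 : (0:ℝ) < 2*((N:ℝ)+1) := by positivity
    have : 0 < 1/(2*((N:ℝ)+1)) := by positivity
    linarith
  push_cast
  linarith



-- exp helpers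
lemma exp_abs_sub_one (y : ℝ) : |Real.exp y - 1| ≤ Real.exp |y| - 1 := by
  rcases le_or_gt 0 y with h | h
  · rw [abs_of_nonneg h, abs_of_nonneg (by linarith [Real.add_one_le_exp y])]
  · rw [abs_of_neg h, abs_of_nonpos (by linarith [Real.exp_le_exp.2 (le_of_lt h), Real.exp_zero] : Real.exp y - 1 ≤ 0)]
    have h1 := Real.add_one_le_exp y
    have h2 := Real.add_one_le_exp (-y)
    linarith

lemma exp_sub_one_le (y : ℝ) (hy : 0 ≤ y) : Real.exp y - 1 ≤ y * Real.exp y := by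
  have h1 := Real.add_one_le_exp (-y)
  have h2 := Real.exp_pos y
  have h3 : Real.exp (-y) * Real.exp y = 1 := by
    rw [← Real.exp_add]; simp
  nlinarith

lemma log_taylor3 (x : ℝ) (hx : |x| ≤ 19/25) :
    |Real.log (1 - x) + (x + x^2/2 + x^3/3)| ≤ (25/6) * x^4 := by
  have h := Real.abs_log_sub_add_sum_range_le (x := x) (lt_of_le_of_lt hx (by norm_num) : |x| < 1) 3
  simp [Finset.sum_range_succ] at h
  have h4 : |x|^4 = x^4 := by rw [← abs_pow, abs_of_nonneg (by positivity)]
  have h6 : (6:ℝ)/25 ≤ 1 - |x| := by linarith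
  have h0 : (0:ℝ) < 1 - |x| := by linarith
  calc |Real.log (1-x) + (x + x^2/2 + x^3/3)|
      = |x + x^2/2 + x^3/3 + Real.log (1-x)| := by ring_nf
    _ ≤ |x|^4 / (1 - |x|) := by
        convert h using 2; ring
    _ ≤ x^4 / (6/25) := by rw [h4]; apply div_le_div_of_nonneg_left (by positivity) (by norm_num) h6
    _ = (25/6) * x^4 := by ring

lemma log_one_sub_abs (u : ℝ) (hu : |u| < 1) : |Real.log (1 - u)| ≤ |u| / (1 - |u|) := by
  have h := Real.abs_log_sub_add_sum_range_le (x := u) hu 0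
  simpa using h



lemma crude_bound (A c0 ε : ℝ) (hA0 : 0 ≤ A) (hA1 : A ≤ 1)
    (hc0 : 7/20 ≤ c0) (hc1 : c0 ≤ 1) (hε : 1 ≤ ε) :
    |A - c0| ≤ 20 * Real.exp 40 * ε * c0 := by
  have he : (1:ℝ) ≤ Real.exp 40 := by
    rw [show (1:ℝ) = Real.exp 0 by simp]
    exact Real.exp_le_exp.2 (by norm_num)
  have s1 : (20:ℝ) ≤ 20 * Real.exp 40 * ε := by nlinarith
  have s2 : (20:ℝ) * (7/20) ≤ (20 * Real.exp 40 * ε) * c0 :=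
    mul_le_mul s1 hc0 (by norm_num) (by nlinarith)
  rw [abs_le]
  constructor <;> nlinarith

-- numeric c0 bounds for n = 1
lemma sqrt_two_div_pi_ge : (7/10:ℝ) ≤ Real.sqrt (2 / Real.pi) := by
  rw [show (7/10:ℝ) = Real.sqrt ((7/10)^2) by rw [Real.sqrt_sq (by norm_num)]]
  apply Real.sqrt_le_sqrt
  rw [le_div_iff₀ Real.pi_pos]
  nlinarith [Real.pi_le_four]

lemma sqrt_two_div_pi_le : Real.sqrt (2 / Real.pi) ≤ 1 := by
  rw [show (1:ℝ) = Real.sqrt 1 by rw [Real.sqrt_one]]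
  apply Real.sqrt_le_sqrt
  rw [div_le_one Real.pi_pos]
  nlinarith [Real.pi_gt_three]

lemma main_case (n K m : ℕ) (T : ℝ) (hn2 : 2 ≤ n) (hKn : K ≤ n) (hm : m = n - K)
    (hKr : (K:ℝ) = ((n:ℝ) + T) / 2)
    (hT76 : |T| ≤ (19/25) * (n:ℝ))
    (hTN : |T| ≤ (n:ℝ))
    (hT3 : |T|^3 ≤ (n:ℝ)^2)
    (hT2 : T^2 ≤ |T|^3 + 1) :
    |(n.choose K : ℝ) / 2 ^ n -
        Real.sqrt (2 / Real.pi) * (1 / Real.sqrt n) * Real.exp (-T ^ 2 / (2 * n))| ≤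
      20 * Real.exp 40 * (|T| ^ 3 / (n : ℝ) ^ 2 + 1 / n) *
        (Real.sqrt (2 / Real.pi) * (1 / Real.sqrt n) * Real.exp (-T ^ 2 / (2 * n))) := by
  have hN2 : (2:ℝ) ≤ (n:ℝ) := by exact_mod_cast hn2
  have hN1 : (1:ℝ) ≤ (n:ℝ) := by linarith
  have hN0 : (0:ℝ) < (n:ℝ) := by linarith
  have hT76' := abs_le.1 hT76
  have hKge : (3/25) * (n:ℝ) ≤ (K:ℝ) := by rw [hKr]; linarith
  have hKposR : (0:ℝ) < (K:ℝ) := by linarith only [hKge, hN0]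
  have hK1 : 1 ≤ K := Nat.cast_pos.mp hKposR
  have hmr : (m:ℝ) = ((n:ℝ) - T) / 2 := by
    rw [hm]
    rw [Nat.cast_sub hKn, hKr]
    ring
  have hmge : (3/25) * (n:ℝ) ≤ (m:ℝ) := by rw [hmr]; linarith
  have hmposR : (0:ℝ) < (m:ℝ) := by linarith only [hmge, hN0]
  have hm1 : 1 ≤ m := Nat.cast_pos.mp hmposR
  -- abbreviations
  set A : ℝ := (n.choose K : ℝ) / 2 ^ n with hAdef
  set c0 : ℝ := Real.sqrt (2 / Real.pi) * (1 / Real.sqrt n) * Real.exp (-T ^ 2 / (2 * n)) with hc0def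
  set eps : ℝ := |T| ^ 3 / (n : ℝ) ^ 2 + 1 / n with hepsdef
  set x : ℝ := T / (n:ℝ) with hxdef
  clear_value A c0 eps x
  have hxabs : |x| ≤ 19/25 := by
    rw [hxdef, abs_div, abs_of_pos hN0, div_le_iff₀ hN0]
    exact hT76
  have hxle := abs_le.1 hxabs
  have hx1 : (6:ℝ)/25 ≤ 1 + x := by linarith only [hxle.1]
  have hx2 : (6:ℝ)/25 ≤ 1 - x := by linarith only [hxle.2]
  have hTx : T = (n:ℝ) * x := by rw [hxdef]; field_simp
  -- positivity facts
  have hpi := Real.pi_pos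
  have hc0pos : 0 < c0 := by rw [hc0def]; positivity
  have hcp : 0 < (n.choose K : ℝ) := by exact_mod_cast Nat.choose_pos hKn
  have hApos : 0 < A := by rw [hAdef]; positivity
  -- log of factorials
  have hfac : ∀ j : ℕ, 1 ≤ j → Real.log (Nat.factorial j) =
      (j:ℝ) * Real.log j - j + Real.log (Real.sqrt (2 * Real.pi * j)) + SE j := by
    intro j hj
    have := SE_def j
    linarith
  have hfacid : (n.choose K : ℝ) = (Nat.factorial n : ℝ) /
      ((Nat.factorial K : ℝ) * (Nat.factorial m : ℝ)) := by
    have h := Nat.choose_mul_factorial_mul_factorial hKn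
    rw [← hm] at h
    have h2 : ((n.choose K * Nat.factorial K * Nat.factorial m : ℕ) : ℝ)
        = ((Nat.factorial n : ℕ) : ℝ) := by exact_mod_cast congrArg (fun z : ℕ => (z:ℝ)) h
    push_cast at h2
    have hK0 : (Nat.factorial K : ℝ) ≠ 0 := by positivity
    have hm0 : (Nat.factorial m : ℝ) ≠ 0 := by positivity
    field_simp
    linarith
  have hfn : (0:ℝ) < (Nat.factorial n : ℝ) := by positivity
  have hfK : (0:ℝ) < (Nat.factorial K : ℝ) := by positivity
  have hfm : (0:ℝ) < (Nat.factorial m : ℝ) := by positivity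
  have hlogA : Real.log A = Real.log (Nat.factorial n) - Real.log (Nat.factorial K)
      - Real.log (Nat.factorial m) - (n:ℝ) * Real.log 2 := by
    rw [hAdef, hfacid, Real.log_div (by positivity) (by positivity),
      Real.log_div (by positivity) (by positivity),
      Real.log_mul (by positivity) (by positivity), Real.log_pow]
    ring
  have hlogc0 : Real.log c0 = (1/2) * (Real.log 2 - Real.log Real.pi)
      - (1/2) * Real.log (n:ℝ) - T^2/(2*(n:ℝ)) := by
    rw [hc0def, Real.log_mul (by positivity) (Real.exp_ne_zero _),
      Real.log_mul (by positivity) (by positivity), Real.log_exp,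
      Real.log_sqrt (by positivity), Real.log_div (by norm_num) (ne_of_gt hpi),
      one_div, Real.log_inv, Real.log_sqrt hN0.le]
    field_simp
    ring
  have hlogsqrt : ∀ j : ℕ, 1 ≤ j → Real.log (Real.sqrt (2 * Real.pi * j)) =
      (1/2) * (Real.log 2 + Real.log Real.pi + Real.log j) := by
    intro j hj
    have hj0 : (0:ℝ) < (j:ℝ) := by exact_mod_cast hj
    rw [Real.log_sqrt (by positivity), Real.log_mul (by positivity) (ne_of_gt hj0),
      Real.log_mul (by norm_num) (ne_of_gt hpi)]
    ring
  have hKx : (K:ℝ) = (n:ℝ) * (1 + x) / 2 := by rw [hKr, hTx]; ring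
  have hmx : (m:ℝ) = (n:ℝ) * (1 - x) / 2 := by rw [hmr, hTx]; ring
  have hlogK : Real.log (K:ℝ) = Real.log (n:ℝ) - Real.log 2 + Real.log (1 + x) := by
    rw [hKx, Real.log_div (by positivity) (by norm_num),
      Real.log_mul (ne_of_gt hN0) (by positivity)]
    ring
  have hlogm : Real.log (m:ℝ) = Real.log (n:ℝ) - Real.log 2 + Real.log (1 - x) := by
    rw [hmx, Real.log_div (by positivity) (by norm_num),
      Real.log_mul (ne_of_gt hN0) (by positivity)]
    ring
  have hTsq : T^2/(2*(n:ℝ)) = (n:ℝ) * x^2 / 2 := by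
    rw [hTx]; field_simp
  -- the key identity
  have hD : Real.log A - Real.log c0 = (SE n - SE K - SE m)
      - (1/2) * (Real.log (1+x) + Real.log (1-x))
      - ((n:ℝ)/2) * ((1+x) * Real.log (1+x) + (1-x) * Real.log (1-x) - x^2) := by
    rw [hlogA, hfac n (by omega), hfac K hK1, hfac m hm1, hlogc0,
      hlogsqrt n (by omega), hlogsqrt K hK1, hlogsqrt m hm1, hlogK, hlogm, hTsq,
      hKx, hmx]
    ring
  -- SE bound
  have hSE : |SE n - SE K - SE m| ≤ 9 / (n:ℝ) := by
    have h1 := SE_nonneg n (by omega); have h2 := SE_le n (by omega)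
    have h3 := SE_nonneg K hK1; have h4 := SE_le K hK1
    have h5 := SE_nonneg m hm1; have h6 := SE_le m hm1
    have hb1 : 1/(2*(K:ℝ)) ≤ 25/(6*(n:ℝ)) := by
      rw [div_le_div_iff₀ (by positivity) (by positivity)]
      linarith only [hKge]
    have hb2 : 1/(2*(m:ℝ)) ≤ 25/(6*(n:ℝ)) := by
      rw [div_le_div_iff₀ (by positivity) (by positivity)]
      linarith only [hmge]
    have hb3 : 1/(2*(n:ℝ)) ≤ 9/(n:ℝ) := by
      rw [div_le_div_iff₀ (by positivity) (by positivity)]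
      linarith only [hN0]
    have hb4 : 25/(6*(n:ℝ)) + 25/(6*(n:ℝ)) ≤ 9/(n:ℝ) := by
      rw [← add_div, div_le_div_iff₀ (by positivity) (by positivity)]
      linarith only [hN0]
    rw [abs_le]
    constructor <;> linarith only [h1, h2, h3, h4, h5, h6, hb1, hb2, hb3, hb4]
  -- Taylor bounds
  have he1 : |Real.log (1+x) - (x - x^2/2 + x^3/3)| ≤ (25/6) * x^4 := by
    have h := log_taylor3 (-x) (by rwa [abs_neg])
    rw [show (1:ℝ) - -x = 1 + x by ring] at h
    have heq : Real.log (1+x) - (x - x^2/2 + x^3/3)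
        = Real.log (1+x) + (-x + (-x)^2/2 + (-x)^3/3) := by ring
    rw [heq]
    calc |Real.log (1+x) + (-x + (-x)^2/2 + (-x)^3/3)| ≤ (25/6) * (-x)^4 := h
      _ = (25/6) * x^4 := by ring
  have he2 : |Real.log (1-x) - (-x - x^2/2 - x^3/3)| ≤ (25/6) * x^4 := by
    have h := log_taylor3 x hxabs
    calc |Real.log (1-x) - (-x - x^2/2 - x^3/3)|
        = |Real.log (1-x) + (x + x^2/2 + x^3/3)| := by ring_nf
      _ ≤ (25/6) * x^4 := h
  -- inner bound
  have hinner : |(1+x) * Real.log (1+x) + (1-x) * Real.log (1-x) - x^2| ≤ 16 * x^4 := by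
    have hid : (1+x) * Real.log (1+x) + (1-x) * Real.log (1-x) - x^2
        = (2/3)*x^4 + (1+x) * (Real.log (1+x) - (x - x^2/2 + x^3/3))
          + (1-x) * (Real.log (1-x) - (-x - x^2/2 - x^3/3)) := by ring
    rw [hid]
    have b1 : |(1+x) * (Real.log (1+x) - (x - x^2/2 + x^3/3))| ≤ (44/25) * ((25/6)*x^4) := by
      rw [abs_mul]
      apply mul_le_mul _ he1 (abs_nonneg _) (by norm_num)
      rw [abs_of_pos (by linarith only [hx1])]
      linarith only [hxle.2]
    have b2 : |(1-x) * (Real.log (1-x) - (-x - x^2/2 - x^3/3))| ≤ (44/25) * ((25/6)*x^4) := by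
      rw [abs_mul]
      apply mul_le_mul _ he2 (abs_nonneg _) (by norm_num)
      rw [abs_of_pos (by linarith only [hx2])]
      linarith only [hxle.1]
    have tri : |(2/3)*x^4 + (1+x) * (Real.log (1+x) - (x - x^2/2 + x^3/3))
          + (1-x) * (Real.log (1-x) - (-x - x^2/2 - x^3/3))|
        ≤ |(2/3)*x^4| + |(1+x) * (Real.log (1+x) - (x - x^2/2 + x^3/3))|
          + |(1-x) * (Real.log (1-x) - (-x - x^2/2 - x^3/3))| :=
      (abs_add_le _ _).trans (add_le_add_left (abs_add_le _ _) _)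
    have h4 : |(2/3)*x^4| = (2/3)*x^4 := abs_of_nonneg (by positivity)
    have hx4 : (0:ℝ) ≤ x^4 := by positivity
    calc _ ≤ _ := tri
      _ ≤ 16 * x^4 := by rw [h4]; linarith only [b1, b2, hx4]
  -- log(1-x^2) bound
  have hB2 : |Real.log (1+x) + Real.log (1-x)| ≤ (625/264) * x^2 := by
    have hmul : Real.log (1+x) + Real.log (1-x) = Real.log (1 - x^2) := by
      rw [← Real.log_mul (by linarith) (by linarith), show (1+x)*(1-x) = 1 - x^2 by ring]
    rw [hmul]
    have hx2' : x^2 ≤ 361/625 := by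
      have h1 : |x|^2 ≤ (19/25:ℝ)^2 := pow_le_pow_left₀ (abs_nonneg x) hxabs 2
      have h2 := sq_abs x
      linarith only [h1, h2]
    have h := log_one_sub_abs (x^2) (by rw [abs_of_nonneg (by positivity)]; linarith only [hx2'])
    rw [abs_of_nonneg (by positivity : (0:ℝ) ≤ x^2)] at h
    have hden : (264:ℝ)/625 ≤ 1 - x^2 := by linarith only [hx2']
    calc |Real.log (1 - x^2)| ≤ x^2 / (1 - x^2) := h
      _ ≤ x^2 / (264/625) := by
          apply div_le_div_of_nonneg_left (by positivity) (by norm_num) hden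
      _ = (625/264) * x^2 := by ring
  -- conversion of x powers
  have hx2eq : x^2 = T^2/(n:ℝ)^2 := by rw [hxdef, div_pow]
  have hx4eq : x^4 = T^4/(n:ℝ)^4 := by rw [hxdef, div_pow]
  have hT4 : T^4 ≤ |T|^3 * (n:ℝ) := by
    have h1 : |T|^4 = T^4 := by rw [← abs_pow, abs_of_nonneg (by positivity)]
    have h2 : |T|^4 = |T|^3 * |T| := by ring
    have h3 : |T|^3 * |T| ≤ |T|^3 * (n:ℝ) := mul_le_mul_of_nonneg_left hTN (by positivity)
    linarith only [h1, h2, h3]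
  have habs_sub_sub : ∀ a b c : ℝ, |a - b - c| ≤ |a| + |b| + |c| := by
    intro a b c
    calc |a - b - c| = |a + -b + -c| := by rw [sub_eq_add_neg, sub_eq_add_neg]
      _ ≤ |a + -b| + |-c| := abs_add_le _ _
      _ ≤ |a| + |-b| + |-c| := add_le_add_left (abs_add_le a (-b)) _
      _ = |a| + |b| + |c| := by rw [abs_neg, abs_neg]
  have hu0 : (0:ℝ) ≤ |T|^3/(n:ℝ)^2 := by positivity
  have hv0 : (0:ℝ) ≤ 1/(n:ℝ) := by positivity
  have m2 : |(1/2) * (Real.log (1+x) + Real.log (1-x))| ≤ (1/2) * ((625/264) * x^2) := by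
    rw [abs_mul, abs_of_nonneg (by norm_num : (0:ℝ) ≤ 1/2)]
    exact mul_le_mul_of_nonneg_left hB2 (by norm_num)
  have m3 : |((n:ℝ)/2) * ((1+x) * Real.log (1+x) + (1-x) * Real.log (1-x) - x^2)|
      ≤ ((n:ℝ)/2) * (16 * x^4) := by
    rw [abs_mul, abs_of_nonneg (by positivity : (0:ℝ) ≤ (n:ℝ)/2)]
    exact mul_le_mul_of_nonneg_left hinner (by positivity)
  have c2 : (1/2) * ((625/264) * x^2) ≤ (6/5) * (|T|^3/(n:ℝ)^2) + (6/5) * (1/(n:ℝ)) := by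
    rw [hx2eq]
    have d1 : T^2/(n:ℝ)^2 ≤ (|T|^3 + 1)/(n:ℝ)^2 := by gcongr
    have d2 : (1:ℝ)/(n:ℝ)^2 ≤ 1/(n:ℝ) := by
      rw [div_le_div_iff₀ (by positivity) (by positivity)]
      have : (n:ℝ)*1 ≤ (n:ℝ)*(n:ℝ) := mul_le_mul_of_nonneg_left hN1 hN0.le
      linarith only [this]
    have d3 : (|T|^3 + 1)/(n:ℝ)^2 = |T|^3/(n:ℝ)^2 + 1/(n:ℝ)^2 := add_div _ _ _
    linarith only [d1, d2, d3, hu0, hv0]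
  have c3 : ((n:ℝ)/2) * (16 * x^4) ≤ 8 * (|T|^3/(n:ℝ)^2) := by
    rw [hx4eq]
    have heq : (n:ℝ)/2 * (16 * (T^4/(n:ℝ)^4)) = 8*T^4/(n:ℝ)^3 := by
      field_simp
      ring
    rw [heq, show (8:ℝ) * (|T|^3/(n:ℝ)^2) = 8*|T|^3/(n:ℝ)^2 from by ring,
      div_le_div_iff₀ (by positivity) (by positivity)]
    have := mul_le_mul_of_nonneg_left hT4 (show (0:ℝ) ≤ 8*(n:ℝ)^2 by positivity)
    nlinarith only [this]
  have hSE' : |SE n - SE K - SE m| ≤ 9 * (1/(n:ℝ)) := by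
    rw [show (9:ℝ)*(1/(n:ℝ)) = 9/(n:ℝ) from by ring]
    exact hSE
  have hDabs : |Real.log A - Real.log c0| ≤ 20 * eps := by
    rw [hD, hepsdef]
    calc |(SE n - SE K - SE m) - (1/2) * (Real.log (1+x) + Real.log (1-x))
          - ((n:ℝ)/2) * ((1+x) * Real.log (1+x) + (1-x) * Real.log (1-x) - x^2)|
        ≤ |SE n - SE K - SE m| + |(1/2) * (Real.log (1+x) + Real.log (1-x))|
          + |((n:ℝ)/2) * ((1+x) * Real.log (1+x) + (1-x) * Real.log (1-x) - x^2)| :=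
          habs_sub_sub _ _ _
      _ ≤ 20 * (|T|^3/(n:ℝ)^2 + 1/(n:ℝ)) := by
          linarith only [hSE', m2, m3, c2, c3, hu0, hv0]
  have heps2 : eps ≤ 2 := by
    rw [hepsdef]
    have h1 : |T|^3/(n:ℝ)^2 ≤ 1 := by rw [div_le_one (by positivity)]; exact hT3
    have h2 : 1/(n:ℝ) ≤ 1 := by rw [div_le_one hN0]; exact hN1
    linarith only [h1, h2]
  have heps0 : 0 ≤ eps := by rw [hepsdef]; positivity
  have hD40 : |Real.log A - Real.log c0| ≤ 40 := by linarith only [hDabs, heps2, heps0]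
  have hAc : A - c0 = c0 * (Real.exp (Real.log A - Real.log c0) - 1) := by
    rw [Real.exp_sub, Real.exp_log hApos, Real.exp_log hc0pos]
    field_simp
  calc |A - c0| = c0 * |Real.exp (Real.log A - Real.log c0) - 1| := by
        rw [hAc, abs_mul, abs_of_pos hc0pos]
    _ ≤ c0 * (Real.exp |Real.log A - Real.log c0| - 1) :=
        mul_le_mul_of_nonneg_left (exp_abs_sub_one _) hc0pos.le
    _ ≤ c0 * (|Real.log A - Real.log c0| * Real.exp |Real.log A - Real.log c0|) :=
        mul_le_mul_of_nonneg_left (exp_sub_one_le _ (abs_nonneg _)) hc0pos.le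
    _ ≤ c0 * ((20 * eps) * Real.exp 40) := by
        apply mul_le_mul_of_nonneg_left _ hc0pos.le
        exact mul_le_mul hDabs (Real.exp_le_exp.2 hD40) (Real.exp_pos _).le
          (by linarith only [heps0])
    _ = 20 * Real.exp 40 * eps * c0 := by ring


theorem stmt_1 :
    ∃ ξ : ℝ, 0 < ξ ∧ ∀ n : ℕ, 1 ≤ n → ∀ t : ℤ,
      |(t : ℝ)| ≤ (n : ℝ) ^ ((3 : ℝ) / 5) → ((n : ℤ) + t) % 2 = 0 → |t| ≤ (n : ℤ) →
      |(n.choose (((n : ℤ) + t) / 2).toNat : ℝ) / 2 ^ n -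
          Real.sqrt (2 / Real.pi) * (1 / Real.sqrt n) * Real.exp (-(t : ℝ) ^ 2 / (2 * n))| ≤
        ξ * (|(t : ℝ)| ^ 3 / (n : ℝ) ^ 2 + 1 / n) *
          (Real.sqrt (2 / Real.pi) * (1 / Real.sqrt n) * Real.exp (-(t : ℝ) ^ 2 / (2 * n))) := by
  refine ⟨20 * Real.exp 40, by positivity, ?_⟩
  intro n hn t ht hpar htn
  have hn0 : 0 < n := hn
  have hN0 : (0:ℝ) < (n:ℝ) := by exact_mod_cast hn0
  have hN1 : (1:ℝ) ≤ (n:ℝ) := by exact_mod_cast hn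
  have htn' := abs_le.1 htn
  have hk2 : 2 * (((n:ℤ) + t) / 2) = (n:ℤ) + t := by omega
  have hKz : (((((n:ℤ) + t) / 2).toNat : ℕ) : ℤ) = ((n:ℤ) + t) / 2 :=
    Int.toNat_of_nonneg (by omega)
  have hKr : (((((n:ℤ) + t) / 2).toNat : ℕ) : ℝ) = ((n:ℝ) + (t:ℝ)) / 2 := by
    have h2 : (2:ℤ) * (((((n:ℤ) + t) / 2).toNat : ℕ) : ℤ) = (n:ℤ) + t := by
      rw [hKz]; exact hk2
    have h3 := congrArg (fun z : ℤ => (z:ℝ)) h2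
    push_cast at h3
    linarith
  have hKn : ((((n:ℤ) + t) / 2).toNat : ℕ) ≤ n := by omega
  have habsT : |(t:ℝ)| = ((|t| : ℤ) : ℝ) := by push_cast; rfl
  have hTN : |(t:ℝ)| ≤ (n:ℝ) := by rw [habsT]; exact_mod_cast htn
  have hT2 : (t:ℝ)^2 ≤ |(t:ℝ)|^3 + 1 := by
    rcases eq_or_ne t 0 with rfl | ht0
    · norm_num
    · have h1 : (1:ℤ) ≤ |t| := Int.one_le_abs ht0
      have h2 : (1:ℝ) ≤ |(t:ℝ)| := by rw [habsT]; exact_mod_cast h1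
      nlinarith [abs_nonneg (t:ℝ), sq_abs (t:ℝ)]
  rcases Nat.lt_or_ge n 2 with hlt | hge
  · -- n = 1 : crude bound
    have hn1 : n = 1 := by omega
    subst hn1
    have hT1 : |(t:ℝ)| ≤ 1 := by
      have h : ((1:ℕ):ℝ) ^ ((3:ℝ)/5) = 1 := by norm_num
      rwa [h] at ht
    have hsq1 : Real.sqrt ((1:ℕ):ℝ) = 1 := by
      rw [show ((1:ℕ):ℝ) = 1 by norm_num, Real.sqrt_one]
    have hexp_lb : (1:ℝ)/2 ≤ Real.exp (-(t:ℝ)^2/(2*((1:ℕ):ℝ))) := by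
      have h2 : -(1/2 : ℝ) ≤ -(t:ℝ)^2/(2*((1:ℕ):ℝ)) := by
        have : (t:ℝ)^2 ≤ 1 := by nlinarith [sq_abs (t:ℝ), abs_nonneg (t:ℝ)]
        push_cast
        nlinarith
      have h3 := Real.add_one_le_exp (-(t:ℝ)^2/(2*((1:ℕ):ℝ)))
      linarith
    have hexp_ub : Real.exp (-(t:ℝ)^2/(2*((1:ℕ):ℝ))) ≤ 1 := by
      rw [show (1:ℝ) = Real.exp 0 from Real.exp_zero.symm]
      apply Real.exp_le_exp.2
      have : (0:ℝ) ≤ (t:ℝ)^2 := sq_nonneg _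
      push_cast
      nlinarith
    apply crude_bound
    · positivity
    · -- A ≤ 1
      have hc : Nat.choose 1 ((((1:ℕ):ℤ) + t) / 2).toNat ≤ 1 := by
        rcases h : ((((1:ℕ):ℤ) + t) / 2).toNat with _ | _ | j <;> simp [Nat.choose]
      have hc' : ((Nat.choose 1 ((((1:ℕ):ℤ) + t) / 2).toNat : ℕ) : ℝ) ≤ 1 := by
        exact_mod_cast hc
      have h0 : (0:ℝ) ≤ ((Nat.choose 1 ((((1:ℕ):ℤ) + t) / 2).toNat : ℕ) : ℝ) :=
        Nat.cast_nonneg _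
      rw [div_le_one (by positivity)]
      have : (2:ℝ)^1 = 2 := by norm_num
      rw [this]
      linarith
    · -- 7/20 ≤ c0
      rw [hsq1]
      have hs := sqrt_two_div_pi_ge
      have hmm := mul_le_mul hs hexp_lb (by norm_num) (Real.sqrt_nonneg _)
      calc (7/20:ℝ) = (7/10) * (1/2) := by norm_num
        _ ≤ Real.sqrt (2/Real.pi) * Real.exp (-(t:ℝ)^2/(2*((1:ℕ):ℝ))) := hmm
        _ = Real.sqrt (2/Real.pi) * (1/1) * Real.exp (-(t:ℝ)^2/(2*((1:ℕ):ℝ))) := by ring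
    · -- c0 ≤ 1
      rw [hsq1]
      have hs := sqrt_two_div_pi_le
      have hmm := mul_le_mul hs hexp_ub (Real.exp_pos _).le (by norm_num)
      calc Real.sqrt (2/Real.pi) * (1/1) * Real.exp (-(t:ℝ)^2/(2*((1:ℕ):ℝ)))
          = Real.sqrt (2/Real.pi) * Real.exp (-(t:ℝ)^2/(2*((1:ℕ):ℝ))) := by ring
        _ ≤ 1 * 1 := hmm
        _ = 1 := by norm_num
    · -- 1 ≤ eps
      have h0 : (0:ℝ) ≤ |(t:ℝ)|^3 := by positivity
      have : ((1:ℕ):ℝ) = 1 := by norm_num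
      rw [this]
      norm_num
  · -- main case n ≥ 2
    have hN2 : (2:ℝ) ≤ (n:ℝ) := by exact_mod_cast hge
    have hT76 : |(t:ℝ)| ≤ (19/25) * (n:ℝ) := by
      have h4 : ((2:ℝ)^((2:ℝ)/5))^(5:ℕ) = 4 := by
        rw [← Real.rpow_natCast ((2:ℝ)^((2:ℝ)/5)) 5, ← Real.rpow_mul (by norm_num : (0:ℝ) ≤ 2)]
        norm_num
      have key : (25/19:ℝ) ≤ (2:ℝ)^((2:ℝ)/5) := by
        apply le_of_pow_le_pow_left₀ (n := 5) (by norm_num) (by positivity)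
        rw [h4]; norm_num
      have key2 : (25/19:ℝ) ≤ (n:ℝ)^((2:ℝ)/5) :=
        key.trans (Real.rpow_le_rpow (by norm_num) hN2 (by norm_num))
      have hsplit : (n:ℝ)^((3:ℝ)/5) * (n:ℝ)^((2:ℝ)/5) = (n:ℝ) := by
        rw [← Real.rpow_add hN0]
        norm_num
      have ha : (0:ℝ) ≤ (n:ℝ)^((3:ℝ)/5) := Real.rpow_nonneg hN0.le _
      nlinarith [mul_nonneg ha (sub_nonneg.2 key2), hsplit, ht]
    have hT3 : |(t:ℝ)|^3 ≤ (n:ℝ)^2 := by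
      have h1 : |(t:ℝ)|^(3:ℕ) ≤ ((n:ℝ)^((3:ℝ)/5))^(3:ℕ) := pow_le_pow_left₀ (abs_nonneg _) ht 3
      have h2 : ((n:ℝ)^((3:ℝ)/5))^(3:ℕ) = (n:ℝ)^((9:ℝ)/5) := by
        rw [← Real.rpow_natCast ((n:ℝ)^((3:ℝ)/5)) 3, ← Real.rpow_mul hN0.le]
        norm_num
      have h3 : (n:ℝ)^((9:ℝ)/5) ≤ (n:ℝ)^((2:ℝ)) :=
        Real.rpow_le_rpow_of_exponent_le hN1 (by norm_num)
      have h4 : (n:ℝ)^((2:ℝ)) = (n:ℝ)^(2:ℕ) := by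
        rw [show ((2:ℝ)) = ((2:ℕ):ℝ) by norm_num, Real.rpow_natCast]
      calc |(t:ℝ)|^3 ≤ ((n:ℝ)^((3:ℝ)/5))^(3:ℕ) := h1
        _ = (n:ℝ)^((9:ℝ)/5) := h2
        _ ≤ (n:ℝ)^((2:ℝ)) := h3
        _ = (n:ℝ)^2 := h4
    exact main_case n _ (n - (((n:ℤ) + t) / 2).toNat) (t:ℝ) hge hKn rfl hKr hT76 hTN hT3 hT2
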